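/- If R is a rate matrix on a finite state space (off-diagonal entries nonnegative, columns summing to zero) and p^ss is a strictly positive stationary distribution of R, then the relative entropy D(p(t) | p^ss) is non-increasing along solutions of the master equation dp/dt = R p: its time derivative satisfies d/dt D(p(t)|p^ss) ≤ 0 whenever p(t) is a strictly positive probability vector. -/

import Mathlib

open Matrix

lemma key_ineq {a b : ℝ} (ha : 0 < a) (hb : 0 < b) :
    a * (Real.log b - Real.log a) ≤ b - a := by
  rw [← Real.log_div hb.ne' ha.ne']
  have h := Real.log_le_sub_one_of_pos (div_pos hb ha)
  calc a * Real.log (b / a) ≤ a * (b / a - 1) := mul_le_mul_of_nonneg_left h ha.le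
    _ = b - a := by field_simp

/-- For a rate matrix `R` (off-diagonal entries nonnegative, columns summing to zero) on a
finite state space with strictly positive stationary distribution `pss`, the relative entropy
`D(p(t)|pss) = ∑ i, p t i * log (p t i / pss i)` is non-increasing along solutions of the
master equation `dp/dt = R p`: any derivative of it at a time `t` where `p t` is a strictly
positive probability vector is `≤ 0`. -/
theorem relative_entropy_nonincreasing {S : Type*} [Fintype S] [DecidableEq S]
    (R : Matrix S S ℝ)
    (hoff : ∀ i j, i ≠ j → 0 ≤ R i j)
    (hcol : ∀ j, ∑ i, R i j = 0)
    (pss : S → ℝ) (hssPos : ∀ i, 0 < pss i) (hss1 : ∑ i, pss i = 1)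
    (hstat : R *ᵥ pss = 0)
    (p : ℝ → S → ℝ) (t : ℝ)
    (hODE : ∀ i, HasDerivAt (fun s => p s i) ((R *ᵥ p t) i) t)
    (hpos : ∀ i, 0 < p t i) (hnorm : ∑ i, p t i = 1)
    (d : ℝ)
    (hD : HasDerivAt (fun s => ∑ i, p s i * Real.log (p s i / pss i)) d t) :
    d ≤ 0 := by
  set q : S → ℝ := R *ᵥ p t with hq
  set L : S → ℝ := fun i => Real.log (p t i / pss i) with hL
  -- compute the derivative
  have hderiv : HasDerivAt (fun s => ∑ i, p s i * Real.log (p s i / pss i))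
      (∑ i, (L i + 1) * q i) t := by
    apply HasDerivAt.fun_sum
    intro i _
    have h1 : HasDerivAt (fun x : ℝ => x * Real.log (x / pss i)) (L i + 1) (p t i) := by
      have hlog : HasDerivAt (fun x : ℝ => Real.log (x / pss i)) (1 / p t i) (p t i) := by
        have h0 : p t i / pss i ≠ 0 := (div_pos (hpos i) (hssPos i)).ne'
        have := (Real.hasDerivAt_log h0).comp (p t i)
          ((hasDerivAt_id (p t i)).div_const (pss i))
        refine HasDerivAt.congr_deriv this ?_
        have := (hssPos i).ne'
        have := (hpos i).ne'
        field_simp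
      have := (hasDerivAt_id (p t i)).mul hlog
      refine HasDerivAt.congr_deriv this ?_
      have h2 := (hpos i).ne'
      simp [hL]
      field_simp
    exact h1.comp t (hODE i)
  have hd : d = ∑ i, (L i + 1) * q i := hD.unique hderiv
  -- sum of q is zero
  have hqi : ∀ i, q i = ∑ j, R i j * p t j := by
    intro i; simp [hq, mulVec, dotProduct]
  have hstati : ∀ i, ∑ j, R i j * pss j = 0 := by
    intro i
    have := congrFun hstat i
    simpa [mulVec, dotProduct] using this
  have hqsum : ∑ i, q i = 0 := by
    simp only [hqi]
    rw [Finset.sum_comm]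
    have : ∀ j, ∑ i, R i j * p t j = 0 := by
      intro j
      rw [← Finset.sum_mul, hcol j, zero_mul]
    simp [this]
  -- rewrite d as a double sum
  have hd2 : d = ∑ i, ∑ j, R i j * (p t j * (L i - L j)) := by
    have hA : ∑ i, ∑ j, R i j * (p t j * L j) = 0 := by
      rw [Finset.sum_comm]
      apply Finset.sum_eq_zero
      intro j _
      rw [← Finset.sum_mul, hcol j, zero_mul]
    calc d = ∑ i, (L i + 1) * q i := hd
      _ = ∑ i, L i * q i + ∑ i, q i := by
          rw [← Finset.sum_add_distrib]; apply Finset.sum_congr rfl; intros; ring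
      _ = ∑ i, L i * q i := by rw [hqsum, add_zero]
      _ = ∑ i, ∑ j, R i j * (p t j * L i) := by
          apply Finset.sum_congr rfl; intro i _
          rw [hqi i, Finset.mul_sum]; apply Finset.sum_congr rfl; intros; ring
      _ = ∑ i, ∑ j, R i j * (p t j * (L i - L j)) := by
          rw [← sub_zero (∑ i, ∑ j, R i j * (p t j * L i)), ← hA,
            ← Finset.sum_sub_distrib]
          apply Finset.sum_congr rfl; intro i _
          rw [← Finset.sum_sub_distrib]
          apply Finset.sum_congr rfl; intros; ring
  -- termwise bound
  have hterm : ∀ i j, R i j * (p t j * (L i - L j)) ≤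
      R i j * (pss j * (p t i / pss i) - p t j) := by
    intro i j
    by_cases hij : i = j
    · subst hij
      have : pss i * (p t i / pss i) - p t i = 0 := by
        rw [mul_div_cancel₀ _ (hssPos i).ne', sub_self]
      simp [this]
    · apply mul_le_mul_of_nonneg_left _ (hoff i j hij)
      have hk := key_ineq (div_pos (hpos j) (hssPos j)) (div_pos (hpos i) (hssPos i))
      have h2 := mul_le_mul_of_nonneg_left hk (hssPos j).le
      calc p t j * (L i - L j)
          = pss j * (p t j / pss j *
              (Real.log (p t i / pss i) - Real.log (p t j / pss j))) := by
            simp only [hL]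
            rw [← mul_assoc, mul_div_cancel₀ _ (hssPos j).ne']
        _ ≤ pss j * (p t i / pss i - p t j / pss j) := h2
        _ = pss j * (p t i / pss i) - p t j := by
            rw [mul_sub, mul_div_cancel₀ _ (hssPos j).ne']
  -- the bounding sum is zero
  have hzero : ∑ i, ∑ j, R i j * (pss j * (p t i / pss i) - p t j) = 0 := by
    have h1 : ∑ i, ∑ j, R i j * (pss j * (p t i / pss i)) = 0 := by
      apply Finset.sum_eq_zero
      intro i _
      have : ∑ j, R i j * (pss j * (p t i / pss i))
          = (∑ j, R i j * pss j) * (p t i / pss i) := by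
        rw [Finset.sum_mul]; apply Finset.sum_congr rfl; intros; ring
      rw [this, hstati i, zero_mul]
    have h2 : ∑ i, ∑ j, R i j * p t j = 0 := by
      rw [Finset.sum_comm]
      apply Finset.sum_eq_zero
      intro j _
      rw [← Finset.sum_mul, hcol j, zero_mul]
    calc ∑ i, ∑ j, R i j * (pss j * (p t i / pss i) - p t j)
        = ∑ i, ∑ j, (R i j * (pss j * (p t i / pss i)) - R i j * p t j) := by
          apply Finset.sum_congr rfl; intro i _
          apply Finset.sum_congr rfl; intros; ring
      _ = 0 := by
          simp only [Finset.sum_sub_distrib]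
          rw [h1, h2, sub_zero]
  rw [hd2, ← hzero]
  apply Finset.sum_le_sum
  intro i _
  exact Finset.sum_le_sum fun j _ => hterm i j
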